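/- Let p be a prime, n a positive integer, and σ : F_{p^n} → Z/p^nZ a bijection. (a) If L : F_{p^n} → F_{p^n} is a linearized permutation polynomial (an F_p-linear bijection of F_{p^n}), then for every c ∈ F_{p^n} with c ≠ 1 and every a ∈ F_{p^n}, ∑_{x ∈ F_{p^n}} ζ_{p^n}^{σ(L(x+a) − c·L(x))} = 0 (the difference L(x+a) − c·L(x) computed in F_{p^n}); in particular L is perfect₂ c-nonlinear for all c ≠ 1. (b) If F is any bijection of F_{p^n}, then ∑_{x ∈ F_{p^n}} ζ_{p^n}^{σ(F(x))} = 0, i.e., W_F(0) = 0, and hence F is 0-differential bent₂. -/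

import Mathlib

open Finset

noncomputable section

/-- Finite fields `GaloisField p n` are finite; fix a `Fintype` instance. -/
noncomputable instance (p n : ℕ) [Fact p.Prime] : Fintype (GaloisField p n) :=
  Fintype.ofFinite _

/-- `ζ_q = exp(2πi/q)`. -/
noncomputable def zetaC (q : ℕ) : ℂ := Complex.exp (2 * Real.pi * Complex.I / q)

/-- `ζ_p^t` for `t ∈ F_p`, computed via the integer lift of `t`. -/
noncomputable def eChar (p : ℕ) (t : ZMod p) : ℂ := zetaC p ^ t.val

/-- `ζ_q^s` for `s ∈ Z/qZ`, computed via the integer lift of `s`. -/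
noncomputable def eCharM (q : ℕ) (s : ZMod q) : ℂ := zetaC q ^ s.val

/-- The absolute trace `Tr_k : F_{p^k} → F_p`. -/
noncomputable def trAbs (p k : ℕ) [Fact p.Prime] (x : GaloisField p k) : ZMod p :=
  Algebra.trace (ZMod p) (GaloisField p k) x

/-- The second-kind Walsh transform
`W_H(a) = ∑_x ζ_{p^m}^{σ(H(x))}·ζ_p^{−Tr_n(a·x)}`. -/
noncomputable def Walsh2 (p n m : ℕ) [Fact p.Prime] (σ : GaloisField p m → ZMod (p ^ m))
    (H : GaloisField p n → GaloisField p m) (a : GaloisField p n) : ℂ :=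
  ∑ x : GaloisField p n, eCharM (p ^ m) (σ (H x)) * eChar p (-(trAbs p n (a * x)))

/-- The second-kind `c`-crosscorrelation
`cC_{F,G}(u) = ∑_x ζ_{p^m}^{σ(F(x+u)) − σ(c·G(x))}`, the difference of exponents
taken in `Z/p^mZ`. -/
noncomputable def crossCorr2 (p n m : ℕ) [Fact p.Prime] (σ : GaloisField p m → ZMod (p ^ m))
    (F G : GaloisField p n → GaloisField p m) (c : GaloisField p m)
    (u : GaloisField p n) : ℂ :=
  ∑ x : GaloisField p n, eCharM (p ^ m) (σ (F (x + u)) - σ (c * G x))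

/-- The second-kind `c`-autocorrelation `cC_F = cC_{F,F}`. -/
noncomputable def autoCorr2 (p n m : ℕ) [Fact p.Prime] (σ : GaloisField p m → ZMod (p ^ m))
    (F : GaloisField p n → GaloisField p m) (c : GaloisField p m)
    (u : GaloisField p n) : ℂ :=
  crossCorr2 p n m σ F F c u

/-- `F` is perfect₂ `c`-nonlinear: `cC_F(u) = 0` for all `u ≠ 0`. -/
def PerfectCNonlinear2 (p n m : ℕ) [Fact p.Prime] (σ : GaloisField p m → ZMod (p ^ m))
    (F : GaloisField p n → GaloisField p m) (c : GaloisField p m) : Prop :=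
  ∀ u : GaloisField p n, u ≠ 0 → autoCorr2 p n m σ F c u = 0

/-- `F` is strictly perfect₂ `c`-nonlinear: additionally `cC_F(0) = 0`. -/
def StrictlyPerfectCNonlinear2 (p n m : ℕ) [Fact p.Prime] (σ : GaloisField p m → ZMod (p ^ m))
    (F : GaloisField p n → GaloisField p m) (c : GaloisField p m) : Prop :=
  PerfectCNonlinear2 p n m σ F c ∧ autoCorr2 p n m σ F c 0 = 0

/-- `F` is `c`-differential bent₂: `W_F(x)·conj(W_{cF}(x)) = cC_F(0)` for all `x`,
where `cF` is the map `x ↦ c·F(x)`. -/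
def CDifferentialBent2 (p n m : ℕ) [Fact p.Prime] (σ : GaloisField p m → ZMod (p ^ m))
    (F : GaloisField p n → GaloisField p m) (c : GaloisField p m) : Prop :=
  ∀ x : GaloisField p n,
    Walsh2 p n m σ F x * (starRingEnd ℂ) (Walsh2 p n m σ (fun y => c * F y) x) =
      autoCorr2 p n m σ F c 0


/-- Sum of all `q`-th roots of unity vanishes for `q > 1`. -/
lemma zmod_zeta_sum_zero (q : ℕ) [NeZero q] (hq : 1 < q) : ∑ s : ZMod q, eCharM q s = 0 := by
  have h1 : ∑ s : ZMod q, eCharM q s = ∑ i ∈ Finset.range q, zetaC q ^ i := by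
    apply Finset.sum_nbij' (i := fun s => ZMod.val s) (j := fun i => (i : ZMod q))
    · simp [ZMod.val_lt]
    · simp
    · intro a _; simp
    · intro a ha; simp only [mem_range] at ha; simp [ZMod.val_cast_of_lt ha]
    · intro a _; rfl
  rw [h1]
  exact (Complex.isPrimitiveRoot_exp q (by omega)).geom_sum_eq_zero hq

/-- Sum over a bijectively reindexed family of all `q`-th roots of unity vanishes. -/
lemma bij_zeta_sum_zero {α : Type*} [Fintype α] (q : ℕ) [NeZero q] (hq : 1 < q)
    (g : α → ZMod q) (hg : Function.Bijective g) : ∑ x : α, eCharM q (g x) = 0 := by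
  rw [hg.sum_comp (fun s => eCharM q s)]
  exact zmod_zeta_sum_zero q hq

/-- The additive character sum `∑_x ζ_p^{-Tr(ax)}` vanishes for `a ≠ 0`. -/
lemma char_sum_zero (p n : ℕ) [Fact p.Prime] {a : GaloisField p n} (ha : a ≠ 0) :
    ∑ x : GaloisField p n, eChar p (-(trAbs p n (a * x))) = 0 := by
  have hp : 1 < p := (Fact.out : p.Prime).one_lt
  haveI : NeZero p := ⟨by omega⟩
  set f : GaloisField p n → ZMod p := fun x => -(trAbs p n (a * x)) with hf
  have hfadd : ∀ x y, f (x + y) = f x + f y := by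
    intro x y; simp [hf, trAbs, mul_add, map_add]; ring
  have hsurj : Function.Surjective f := by
    intro t
    obtain ⟨y, hy⟩ := Algebra.trace_surjective (ZMod p) (GaloisField p n) (-t)
    refine ⟨a⁻¹ * y, ?_⟩
    simp [hf, trAbs, ← mul_assoc, mul_inv_cancel₀ ha, hy]
  have hcard : ∀ t : ZMod p, (univ.filter (fun x => f x = t)).card =
      (univ.filter (fun x => f x = 0)).card := by
    intro t
    obtain ⟨xt, hxt⟩ := hsurj t
    apply Finset.card_nbij' (i := fun x => x - xt) (j := fun x => x + xt)
    · intro x hx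
      simp only [mem_coe, mem_filter, mem_univ, true_and] at hx ⊢
      have h2 := hfadd (x - xt) xt
      rw [sub_add_cancel, hxt] at h2
      rw [eq_sub_of_add_eq h2.symm, hx, sub_self]
    · intro x hx
      simp only [mem_coe, mem_filter, mem_univ, true_and] at hx ⊢
      rw [hfadd, hx, hxt, zero_add]
    · intro x _; simp
    · intro x _; simp
  calc ∑ x : GaloisField p n, eChar p (f x)
      = ∑ t : ZMod p, ∑ x ∈ univ.filter (fun x => f x = t), eChar p t :=
        (Finset.sum_fiberwise' univ f (fun t => eChar p t)).symm
    _ = ∑ t : ZMod p, (univ.filter (fun x => f x = 0)).card • eChar p t := by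
        refine Finset.sum_congr rfl fun t _ => ?_
        rw [Finset.sum_const, hcard t]
    _ = (univ.filter (fun x => f x = 0)).card • ∑ t : ZMod p, eChar p t := by
        rw [Finset.smul_sum]
    _ = 0 := by
        have : ∑ t : ZMod p, eChar p t = 0 := by
          simpa [eChar, eCharM] using zmod_zeta_sum_zero p hp
        rw [this, smul_zero]

theorem statement_17 (p n : ℕ) [Fact p.Prime] (hn : 0 < n)
    (σ : GaloisField p n → ZMod (p ^ n)) (hσ : Function.Bijective σ) :
    (∀ L : GaloisField p n → GaloisField p n,
      Function.Bijective L →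
      (∀ x y, L (x + y) = L x + L y) →
      (∀ (t : ZMod p) (x : GaloisField p n), L (t • x) = t • L x) →
      ∀ c : GaloisField p n, c ≠ 1 → ∀ a : GaloisField p n,
        ∑ x : GaloisField p n, eCharM (p ^ n) (σ (L (x + a) - c * L x)) = 0) ∧
    (∀ F : GaloisField p n → GaloisField p n, Function.Bijective F →
      (∑ x : GaloisField p n, eCharM (p ^ n) (σ (F x)) = 0) ∧
      Walsh2 p n n σ F 0 = 0 ∧
      ∀ a : GaloisField p n,
        Walsh2 p n n σ F a *
            (starRingEnd ℂ) (Walsh2 p n n σ (fun y => 0 * F y) a) =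
          ∑ x : GaloisField p n, eCharM (p ^ n) (σ (F (x + 0) - 0 * F x))) := by
  have hp : 1 < p := (Fact.out : p.Prime).one_lt
  have hq : 1 < p ^ n := Nat.one_lt_pow hn.ne' hp
  haveI : NeZero (p ^ n) := ⟨by omega⟩
  constructor
  · intro L hL hadd _ c hc a
    have h1c : (1 : GaloisField p n) - c ≠ 0 := sub_ne_zero.mpr (Ne.symm hc)
    have key : ∀ x, L (x + a) - c * L x = (1 - c) * L x + L a := by
      intro x; rw [hadd]; ring
    apply bij_zeta_sum_zero _ hq
    constructor
    · intro x y hxy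
      have h2 := hσ.1 hxy
      rw [key, key] at h2
      exact hL.1 (mul_left_cancel₀ h1c (add_right_cancel h2))
    · intro s
      obtain ⟨w, hw⟩ := hσ.2 s
      obtain ⟨z, hz⟩ := hL.2 ((1 - c)⁻¹ * (w - L a))
      refine ⟨z, ?_⟩
      show σ (L (z + a) - c * L z) = s
      rw [key, hz, ← mul_assoc, mul_inv_cancel₀ h1c, one_mul, sub_add_cancel, hw]
  · intro F hF
    have h1 : ∑ x : GaloisField p n, eCharM (p ^ n) (σ (F x)) = 0 :=
      bij_zeta_sum_zero _ hq _ (hσ.comp hF)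
    have hW0 : Walsh2 p n n σ F 0 = 0 := by
      unfold Walsh2
      simpa [trAbs, eChar] using h1
    refine ⟨h1, hW0, fun a => ?_⟩
    have hRHS : ∑ x : GaloisField p n, eCharM (p ^ n) (σ (F (x + 0) - 0 * F x)) = 0 := by
      simpa using h1
    rw [hRHS]
    by_cases ha : a = 0
    · rw [ha, hW0, zero_mul]
    · have hWc : Walsh2 p n n σ (fun y => 0 * F y) a = 0 := by
        unfold Walsh2
        simp only [zero_mul]
        rw [← Finset.mul_sum]
        rw [char_sum_zero p n ha, mul_zero]
      rw [hWc, map_zero, mul_zero]
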